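/- (Solvability identity for the first corrector.) Let θ₀(y) = (1/2)(1 − tanh(y/(2√2))), let V₀, F ∈ ℝ, let Ψ₀ : ℝ → ℝ be bounded and continuously differentiable with bounded derivative, and let θ₁ : ℝ → ℝ be bounded and three times continuously differentiable with bounded derivatives, satisfying −θ₁''(y) + W''(θ₀(y)) θ₁(y) = −V₀ θ₀'(y) + Ψ₀(y) θ₀'(y) + F for all y ∈ ℝ. Then ∫_ℝ W'''(θ₀(y)) (θ₀'(y))² θ₁(y) dy + ∫_ℝ Ψ₀(y) θ₀'(y) θ₀''(y) dy = 0. -/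

import Mathlib

open Real MeasureTheory Filter Topology

noncomputable def W (ρ : ℝ) : ℝ := (1/4) * ρ^2 * (1 - ρ)^2
noncomputable def theta0 (y : ℝ) : ℝ := (1/2) * (1 - Real.tanh (y / (2 * Real.sqrt 2)))

namespace FC

noncomputable def c : ℝ := 1 / (2 * Real.sqrt 2)

lemma c_pos : 0 < c := by
  unfold c
  positivity

lemma c_sq : c^2 = 1/8 := by
  unfold c
  rw [div_pow, mul_pow, Real.sq_sqrt (by norm_num : (0:ℝ) ≤ 2)]
  norm_num

lemma hasDerivAt_tanh (x : ℝ) : HasDerivAt Real.tanh (1 - Real.tanh x ^ 2) x := by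
  have hc := Real.cosh_pos x
  have h : HasDerivAt (fun x => Real.sinh x / Real.cosh x)
      ((Real.cosh x * Real.cosh x - Real.sinh x * Real.sinh x) / Real.cosh x ^ 2) x :=
    (Real.hasDerivAt_sinh x).div (Real.hasDerivAt_cosh x) hc.ne'
  have he : Real.tanh = fun x => Real.sinh x / Real.cosh x :=
    funext fun x => Real.tanh_eq_sinh_div_cosh x
  rw [he]
  convert h using 1
  simp only []
  rw [div_pow]
  field_simp

noncomputable def t (y : ℝ) : ℝ := Real.tanh (c * y)
noncomputable def q (y : ℝ) : ℝ := 1 - t y ^ 2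

lemma hasDerivAt_t (y : ℝ) : HasDerivAt t (c * q y) y := by
  have h := (hasDerivAt_tanh (c * y)).comp y ((hasDerivAt_id y).const_mul c)
  simp only [id_eq, mul_one] at h
  unfold t q
  refine h.congr_deriv ?_
  unfold t
  ring

lemma hasDerivAt_q (y : ℝ) : HasDerivAt q (-2 * c * t y * q y) y := by
  have h := ((hasDerivAt_t y).pow 2).const_sub 1
  unfold q
  refine h.congr_deriv ?_
  unfold q
  ring

noncomputable def D1 (y : ℝ) : ℝ := -(c/2) * q y
noncomputable def D2 (y : ℝ) : ℝ := c^2 * t y * q y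
noncomputable def D3 (y : ℝ) : ℝ := c^3 * q y * (1 - 3 * t y ^ 2)
noncomputable def D4 (y : ℝ) : ℝ := -2 * c^4 * t y * q y * (4 - 6 * t y ^ 2)

lemma theta0_eq : theta0 = fun y => (1/2) * (1 - t y) := by
  funext y
  unfold theta0 t
  rw [show y / (2*Real.sqrt 2) = c * y by unfold c; ring]

lemma hasDerivAt_theta0 (y : ℝ) : HasDerivAt theta0 (D1 y) y := by
  rw [theta0_eq]
  have h := ((hasDerivAt_t y).const_sub 1).const_mul (1/2 : ℝ)
  refine h.congr_deriv ?_
  unfold D1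
  ring

lemma deriv_theta0 : deriv theta0 = D1 := funext fun y => (hasDerivAt_theta0 y).deriv

lemma hasDerivAt_D1 (y : ℝ) : HasDerivAt D1 (D2 y) y := by
  have h := (hasDerivAt_q y).const_mul (-(c/2) : ℝ)
  unfold D1
  refine h.congr_deriv ?_
  unfold D2
  ring

lemma deriv_D1 : deriv D1 = D2 := funext fun y => (hasDerivAt_D1 y).deriv

lemma deriv2_theta0 : deriv (deriv theta0) = D2 := by
  rw [deriv_theta0]
  exact funext fun y => (hasDerivAt_D1 y).deriv

lemma hasDerivAt_D2 (y : ℝ) : HasDerivAt D2 (D3 y) y := by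
  have h := (((hasDerivAt_t y).mul (hasDerivAt_q y)).const_mul (c^2 : ℝ))
  unfold D2
  rw [show (fun z => c^2 * t z * q z) = (fun z => c^2 * (t * q) z) by funext z; simp only [Pi.mul_apply]; ring]
  refine h.congr_deriv ?_
  unfold D3 q
  ring

lemma hasDerivAt_D3 (y : ℝ) : HasDerivAt D3 (D4 y) y := by
  have h := (((hasDerivAt_q y).mul (((hasDerivAt_t y).pow 2).const_mul (3:ℝ) |>.const_sub 1)).const_mul (c^3 : ℝ))
  unfold D3
  rw [show (fun z => c^3 * q z * (1 - 3 * t z ^ 2)) = (fun z => c^3 * (q * fun x => 1 - 3 * (t ^ 2) x) z) by funext z; simp only [Pi.mul_apply, Pi.pow_apply]; ring]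
  refine h.congr_deriv ?_
  unfold D4 q
  simp only [Pi.pow_apply]
  ring

lemma hasDerivAt_W (ρ : ℝ) : HasDerivAt W ((1/2)*ρ - (3/2)*ρ^2 + ρ^3) ρ := by
  have h1 : HasDerivAt (fun ρ : ℝ => ρ^2) (2*ρ) ρ := by simpa using hasDerivAt_pow 2 ρ
  have h2 : HasDerivAt (fun ρ : ℝ => (1-ρ)^2) (2*(1-ρ)*(-1)) ρ := by
    have := ((hasDerivAt_id ρ).const_sub 1).pow 2
    exact this.congr_deriv (by simp)
  have h := (h1.const_mul (1/4 : ℝ)).mul h2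
  unfold W
  refine h.congr_deriv ?_
  ring

lemma deriv_W : deriv W = fun ρ => (1/2)*ρ - (3/2)*ρ^2 + ρ^3 :=
  funext fun ρ => (hasDerivAt_W ρ).deriv

lemma hasDerivAt_dW (ρ : ℝ) :
    HasDerivAt (fun ρ : ℝ => (1/2)*ρ - (3/2)*ρ^2 + ρ^3) (1/2 - 3*ρ + 3*ρ^2) ρ := by
  have h := (((hasDerivAt_id ρ).const_mul (1/2 : ℝ)).sub ((hasDerivAt_pow 2 ρ).const_mul (3/2 : ℝ))).add (hasDerivAt_pow 3 ρ)
  refine h.congr_deriv ?_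
  push_cast
  simp
  ring

lemma deriv2_W : deriv (deriv W) = fun ρ => 1/2 - 3*ρ + 3*ρ^2 := by
  rw [deriv_W]
  exact funext fun ρ => (hasDerivAt_dW ρ).deriv

lemma hasDerivAt_d2W (ρ : ℝ) :
    HasDerivAt (fun ρ : ℝ => 1/2 - 3*ρ + 3*ρ^2) (-3 + 6*ρ) ρ := by
  have h := (((hasDerivAt_id ρ).const_mul (3 : ℝ)).const_sub (1/2 : ℝ)).add ((hasDerivAt_pow 2 ρ).const_mul (3 : ℝ))
  refine h.congr_deriv ?_
  push_cast
  simp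
  ring

lemma deriv3_W : deriv (deriv (deriv W)) = fun ρ => -3 + 6*ρ := by
  rw [deriv2_W]
  exact funext fun ρ => (hasDerivAt_d2W ρ).deriv

lemma key (y : ℝ) : D4 y =
    (1/2 - 3*theta0 y + 3*(theta0 y)^2) * D2 y + (-3 + 6*theta0 y) * (D1 y)^2 := by
  rw [theta0_eq]
  unfold D4 D2 D1 q
  linear_combination (t y * (1 - t y^2) * (4 - 6*t y^2) * (-2*c^2)) * c_sq


lemma q_eq (y : ℝ) : q y = 1 / Real.cosh (c*y)^2 := by
  unfold q t
  rw [Real.tanh_eq_sinh_div_cosh, div_pow]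
  have hc := Real.cosh_pos (c*y)
  field_simp
  exact Real.cosh_sq_sub_sinh_sq _


lemma q_pos (y : ℝ) : 0 < q y := by
  rw [q_eq]
  positivity

lemma q_le_one (y : ℝ) : q y ≤ 1 := by
  unfold q
  nlinarith [sq_nonneg (t y)]

lemma t_sq_le_one (y : ℝ) : t y ^ 2 ≤ 1 := by
  have := q_pos y
  unfold q at this
  linarith

lemma abs_t_le_one (y : ℝ) : |t y| ≤ 1 := by
  rw [abs_le]
  constructor <;> nlinarith [t_sq_le_one y]

lemma q_le (y : ℝ) : q y ≤ 8 * (1 + y^2)⁻¹ := by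
  rw [q_eq]
  have h0 : |c*y| ≤ Real.sinh |c*y| := by
    rcases eq_or_lt_of_le (abs_nonneg (c*y)) with h | h
    · simp [← h]
    · exact (Real.self_lt_sinh_iff.2 h).le
  have h1 : (c*y)^2 ≤ Real.sinh (c*y)^2 := by
    rcases le_or_gt 0 (c*y) with h | h
    · rcases eq_or_lt_of_le h with h' | h'
      · rw [← h']; simp
      · have := (Real.self_lt_sinh_iff.2 h').le
        nlinarith
    · have hs := (Real.sinh_lt_self_iff.2 h).le
      nlinarith
  have h3 : 1 + (c*y)^2 ≤ Real.cosh (c*y)^2 := by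
    rw [Real.cosh_sq']
    linarith
  have h4 : (1 + y^2)/8 ≤ Real.cosh (c*y)^2 := by
    have : (c*y)^2 = y^2/8 := by rw [mul_pow]; rw [c_sq]; ring
    nlinarith [sq_nonneg y]
  have h5 : (0:ℝ) < (1+y^2)/8 := by positivity
  have h6 : (0:ℝ) < 1 + y^2 := by positivity
  calc 1 / Real.cosh (c*y)^2 ≤ 8/(1+y^2) := by
        rw [div_le_div_iff₀ (by positivity) h6]
        nlinarith
    _ = 8 * (1+y^2)⁻¹ := by rw [div_eq_mul_inv]

lemma cont_t : Continuous t :=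
  continuous_iff_continuousAt.2 fun y => (hasDerivAt_t y).continuousAt

lemma cont_q : Continuous q := continuous_const.sub (cont_t.pow 2)

lemma cont_D1 : Continuous D1 := continuous_const.mul cont_q

lemma cont_D2 : Continuous D2 := (continuous_const.mul cont_t).mul cont_q

lemma cont_D3 : Continuous D3 :=
  (continuous_const.mul cont_q).mul (continuous_const.sub (continuous_const.mul (cont_t.pow 2)))

lemma integrable_of_le_q {f : ℝ → ℝ} (hf : Continuous f) {K : ℝ}
    (h : ∀ y, |f y| ≤ K * q y) : Integrable f := by
  have hK : 0 ≤ K := by nlinarith [q_pos 0, h 0, abs_nonneg (f 0), q_le_one 0]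
  apply (integrable_inv_one_add_sq.const_mul (K*8)).mono hf.aestronglyMeasurable
  filter_upwards with y
  rw [Real.norm_eq_abs, Real.norm_eq_abs]
  have h8 : (0:ℝ) < (1 + y^2)⁻¹ := by positivity
  have hb : (0:ℝ) ≤ K*8*(1+y^2)⁻¹ := mul_nonneg (by nlinarith) h8.le
  rw [abs_of_nonneg hb]
  calc |f y| ≤ K * q y := h y
    _ ≤ K * (8 * (1+y^2)⁻¹) := mul_le_mul_of_nonneg_left (q_le y) hK
    _ = K * 8 * (1+y^2)⁻¹ := by ring

lemma tendsto_zero_of_le_q {f : ℝ → ℝ} {K : ℝ} (hK : 0 ≤ K)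
    (h : ∀ y, |f y| ≤ K * q y) {l : Filter ℝ}
    (hl : Tendsto (fun y : ℝ => y^2) l atTop) : Tendsto f l (𝓝 0) := by
  have h1 : Tendsto (fun y : ℝ => 1 + y^2) l atTop :=
    tendsto_atTop_add_const_left _ _ hl
  have h2 : Tendsto (fun y : ℝ => (1+y^2)⁻¹) l (𝓝 0) := h1.inv_tendsto_atTop
  have h3 : Tendsto (fun y : ℝ => K * (8 * (1+y^2)⁻¹)) l (𝓝 0) := by
    have := (h2.const_mul (8:ℝ)).const_mul K
    simpa using this
  refine squeeze_zero_norm (fun y => ?_) h3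
  rw [Real.norm_eq_abs]
  exact (h y).trans (mul_le_mul_of_nonneg_left (q_le y) hK)

lemma abs_D1_le (y : ℝ) : |D1 y| ≤ c * q y := by
  unfold D1
  rw [abs_mul, abs_of_nonneg (q_pos y).le]
  have hc := c_pos
  rw [abs_of_nonpos (by linarith : -(c/2) ≤ 0)]
  nlinarith [q_pos y]

lemma abs_D2_le (y : ℝ) : |D2 y| ≤ c^2 * q y := by
  unfold D2
  rw [abs_mul, abs_mul, abs_of_nonneg (q_pos y).le, abs_of_nonneg (sq_nonneg c)]
  nlinarith [mul_nonneg (mul_nonneg (sq_nonneg c) (sub_nonneg.mpr (abs_t_le_one y))) (q_pos y).le]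

lemma abs_D3_le (y : ℝ) : |D3 y| ≤ 4 * c^3 * q y := by
  unfold D3
  rw [abs_mul, abs_mul, abs_of_nonneg (q_pos y).le]
  have hc := c_pos
  rw [abs_of_nonneg (by positivity : (0:ℝ) ≤ c^3)]
  have h1 : |1 - 3 * t y ^ 2| ≤ 4 := by
    rw [abs_le]
    constructor <;> nlinarith [t_sq_le_one y, sq_nonneg (t y)]
  nlinarith [mul_nonneg (mul_nonneg (by positivity : (0:ℝ) ≤ c^3) (q_pos y).le)
    (sub_nonneg.mpr h1)]

lemma abs4 (a b c d : ℝ) : |a - b + c - d| ≤ |a| + |b| + |c| + |d| := by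
  have h : a - b + c - d = ((a + -b) + c) + -d := by ring
  rw [h]
  calc |((a + -b) + c) + -d| ≤ |(a + -b) + c| + |-d| := abs_add_le _ _
    _ ≤ (|a + -b| + |c|) + |-d| := by linarith [abs_add_le (a + -b) c]
    _ ≤ ((|a| + |-b|) + |c|) + |-d| := by linarith [abs_add_le a (-b)]
    _ = |a| + |b| + |c| + |d| := by rw [abs_neg, abs_neg]

lemma cont_theta0 : Continuous theta0 := by
  rw [theta0_eq]
  exact continuous_const.mul (continuous_const.sub cont_t)

end FC

open FC in
set_option maxHeartbeats 1000000 in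
/-- Solvability identity for the first corrector of the inner expansion. -/
theorem first_corrector_solvability_identity
    (V₀ F : ℝ)
    (Ψ₀ : ℝ → ℝ) (hΨ₀ : ContDiff ℝ 1 Ψ₀)
    (hΨ₀b : ∃ M : ℝ, ∀ y : ℝ, |Ψ₀ y| ≤ M ∧ |deriv Ψ₀ y| ≤ M)
    (θ₁ : ℝ → ℝ) (hθ₁ : ContDiff ℝ 3 θ₁)
    (hθ₁b : ∃ M : ℝ, ∀ y : ℝ, |θ₁ y| ≤ M ∧ |deriv θ₁ y| ≤ M ∧
      |deriv (deriv θ₁) y| ≤ M ∧ |deriv (deriv (deriv θ₁)) y| ≤ M)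
    (hODE : ∀ y : ℝ, -(deriv (deriv θ₁) y) + deriv (deriv W) (theta0 y) * θ₁ y =
      -(V₀ * deriv theta0 y) + Ψ₀ y * deriv theta0 y + F) :
    (∫ y : ℝ, deriv (deriv (deriv W)) (theta0 y) * (deriv theta0 y)^2 * θ₁ y)
      + (∫ y : ℝ, Ψ₀ y * deriv theta0 y * deriv (deriv theta0) y) = 0 := by
  obtain ⟨M, hM⟩ := hθ₁b
  obtain ⟨N, hN⟩ := hΨ₀b
  have hM0 : 0 ≤ M := (abs_nonneg _).trans (hM 0).1
  have hN0 : 0 ≤ N := (abs_nonneg _).trans (hN 0).1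
  have hc := c_pos
  -- differentiability of θ₁
  have hd1 : Differentiable ℝ θ₁ := hθ₁.differentiable (by norm_num)
  have hc2 : ContDiff ℝ 2 (deriv θ₁) := by
    have h21 : ((2:WithTop ℕ∞)+1) = 3 := by norm_num
    rw [← h21] at hθ₁
    exact (contDiff_succ_iff_deriv.mp hθ₁).2.2
  have hd2 : Differentiable ℝ (deriv θ₁) := hc2.differentiable (by norm_num)
  -- the two integrands
  set fy : ℝ → ℝ := fun y => (-3 + 6*theta0 y) * D1 y^2 * θ₁ y with hfy
  set gy : ℝ → ℝ := fun y => Ψ₀ y * D1 y * D2 y with hgy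
  have e1 : (fun y : ℝ => deriv (deriv (deriv W)) (theta0 y) * (deriv theta0 y)^2 * θ₁ y) = fy := by
    funext y
    simp only [deriv3_W, deriv_theta0, hfy]
  have e2 : (fun y : ℝ => Ψ₀ y * deriv theta0 y * deriv (deriv theta0) y) = gy := by
    funext y
    simp only [deriv2_theta0, deriv_theta0, deriv_D1, hgy]
  -- rewritten ODE
  have hODE' : ∀ y, Ψ₀ y * D1 y =
      -(deriv (deriv θ₁) y) + (1/2 - 3*theta0 y + 3*(theta0 y)^2) * θ₁ y + V₀ * D1 y - F := by
    intro y
    have h := hODE y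
    rw [deriv2_W, deriv_theta0] at h
    simp only at h
    linarith
  -- bounds
  have hfb : ∀ y, |fy y| ≤ (3*c^2*M) * q y := by
    intro y
    have e : -3 + 6*theta0 y = -3 * t y := by rw [theta0_eq]; ring
    have hD1sq : D1 y^2 ≤ c^2 * q y := by
      nlinarith [abs_D1_le y, sq_abs (D1 y), q_pos y, q_le_one y, c_pos, abs_nonneg (D1 y),
        mul_nonneg (mul_nonneg (sq_nonneg c) (q_pos y).le) (sub_nonneg.mpr (q_le_one y))]
    have ht3 : |-3 + 6*theta0 y| ≤ 3 := by
      rw [e, abs_mul]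
      have : |(-3 : ℝ)| = 3 := by norm_num
      rw [this]
      nlinarith [abs_t_le_one y]
    calc |fy y| = |(-3 + 6*theta0 y)| * D1 y^2 * |θ₁ y| := by
          rw [hfy]; rw [abs_mul, abs_mul, abs_of_nonneg (sq_nonneg (D1 y))]
      _ ≤ 3 * (c^2 * q y) * M := by
          have b1 : |(-3 + 6*theta0 y)| * D1 y^2 ≤ 3 * (c^2 * q y) :=
            mul_le_mul ht3 hD1sq (sq_nonneg _) (by norm_num)
          exact mul_le_mul b1 (hM y).1 (abs_nonneg _) (by nlinarith [q_pos y, c_pos, sq_nonneg c])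
      _ = (3*c^2*M) * q y := by ring
  have hgb : ∀ y, |gy y| ≤ (N*c^3) * q y := by
    intro y
    have b1 : |Ψ₀ y * D1 y| ≤ N * (c * q y) := by
      rw [abs_mul]
      exact mul_le_mul (hN y).1 (abs_D1_le y) (abs_nonneg _) hN0
    have b2 : |gy y| ≤ (N * (c * q y)) * (c^2 * q y) := by
      rw [hgy]
      simp only []
      rw [abs_mul]
      exact mul_le_mul b1 (abs_D2_le y) (abs_nonneg _) (mul_nonneg hN0 (mul_nonneg c_pos.le (q_pos y).le))
    have hq := q_pos y
    have hq1 := q_le_one y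
    nlinarith [mul_nonneg (mul_nonneg hN0 (by positivity : (0:ℝ) ≤ c^3)) (mul_nonneg hq.le (sub_nonneg.mpr hq1))]
  -- integrability
  have hfc : Continuous fy := by
    rw [hfy]
    exact ((continuous_const.add (continuous_const.mul cont_theta0)).mul (cont_D1.pow 2)).mul hd1.continuous
  have hgc : Continuous gy := by
    rw [hgy]
    exact ((hΨ₀.continuous.mul cont_D1)).mul cont_D2
  have hfint : Integrable fy := integrable_of_le_q hfc hfb
  have hgint : Integrable gy := integrable_of_le_q hgc hgb
  -- the primitive G
  set G : ℝ → ℝ := fun y => D3 y * θ₁ y - D2 y * deriv θ₁ y + (V₀/2)*D1 y^2 - F * D1 y with hGdef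
  have hG : ∀ y, HasDerivAt G (fy y + gy y) y := by
    intro y
    have h1 : HasDerivAt θ₁ (deriv θ₁ y) y := (hd1 y).hasDerivAt
    have h2 : HasDerivAt (deriv θ₁) (deriv (deriv θ₁) y) y := (hd2 y).hasDerivAt
    have hA := (hasDerivAt_D3 y).mul h1
    have hB := (hasDerivAt_D2 y).mul h2
    have hC := ((hasDerivAt_D1 y).pow 2).const_mul (V₀/2 : ℝ)
    have hD := (hasDerivAt_D1 y).const_mul F
    have h := ((hA.sub hB).add hC).sub hD
    rw [hGdef]
    refine h.congr_deriv ?_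
    have k := key y
    have ho := hODE' y
    rw [hfy, hgy]
    simp only []
    rw [ho]
    push_cast
    linear_combination (θ₁ y) * k
  -- bound on G and limits
  have hGb : ∀ y, |G y| ≤ (4*c^3*M + c^2*M + (abs V₀)/2*c^2 + (abs F)*c) * q y := by
    intro y
    have hq := q_pos y
    have hq1 := q_le_one y
    have b1 : |D3 y * θ₁ y| ≤ 4*c^3*M * q y := by
      rw [abs_mul]
      calc |D3 y| * |θ₁ y| ≤ (4*c^3*q y) * M :=
            mul_le_mul (abs_D3_le y) (hM y).1 (abs_nonneg _) (by nlinarith [q_pos y, c_pos, pow_pos c_pos 3])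
        _ = 4*c^3*M * q y := by ring
    have b2 : |D2 y * deriv θ₁ y| ≤ c^2*M * q y := by
      rw [abs_mul]
      calc |D2 y| * |deriv θ₁ y| ≤ (c^2*q y) * M :=
            mul_le_mul (abs_D2_le y) (hM y).2.1 (abs_nonneg _) (by nlinarith [q_pos y, sq_nonneg c])
        _ = c^2*M * q y := by ring
    have hD1sq : D1 y^2 ≤ c^2 * q y := by
      nlinarith [abs_D1_le y, sq_abs (D1 y), q_pos y, q_le_one y, c_pos, abs_nonneg (D1 y),
        mul_nonneg (mul_nonneg (sq_nonneg c) (q_pos y).le) (sub_nonneg.mpr (q_le_one y))]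
    have b3 : |(V₀/2)*D1 y^2| ≤ (abs V₀)/2*c^2 * q y := by
      rw [abs_mul, abs_of_nonneg (sq_nonneg (D1 y))]
      calc |V₀/2| * D1 y^2 ≤ ((abs V₀)/2) * (c^2 * q y) := by
            rw [abs_div]
            simp only [Nat.abs_ofNat]
            exact mul_le_mul le_rfl hD1sq (sq_nonneg _) (by positivity)
        _ = (abs V₀)/2*c^2 * q y := by ring
    have b4 : |F * D1 y| ≤ (abs F)*c * q y := by
      rw [abs_mul]
      calc |F| * |D1 y| ≤ |F| * (c * q y) :=
            mul_le_mul_of_nonneg_left (abs_D1_le y) (abs_nonneg F)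
        _ = (abs F)*c * q y := by ring
    calc |G y| ≤ |D3 y * θ₁ y| + |D2 y * deriv θ₁ y| + |(V₀/2)*D1 y^2| + |F * D1 y| := by
          rw [hGdef]; exact abs4 _ _ _ _
      _ ≤ 4*c^3*M * q y + c^2*M * q y + (abs V₀)/2*c^2 * q y + (abs F)*c * q y := by
          linarith
      _ = (4*c^3*M + c^2*M + (abs V₀)/2*c^2 + (abs F)*c) * q y := by ring
  have hKG0 : (0:ℝ) ≤ 4*c^3*M + c^2*M + (abs V₀)/2*c^2 + (abs F)*c := by
    have h1 : (0:ℝ) ≤ 4*c^3*M := by positivity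
    have h2 : (0:ℝ) ≤ c^2*M := by positivity
    have h3 : (0:ℝ) ≤ (abs V₀)/2*c^2 := by positivity
    have h4 : (0:ℝ) ≤ (abs F)*c := by positivity
    linarith
  have htop : Tendsto G atTop (𝓝 0) := by
    apply tendsto_zero_of_le_q hKG0 hGb
    exact tendsto_pow_atTop (two_ne_zero)
  have hbot : Tendsto G atBot (𝓝 0) := by
    apply tendsto_zero_of_le_q hKG0 hGb
    have h := (tendsto_pow_atTop (α := ℝ) (n := 2) two_ne_zero).comp tendsto_abs_atBot_atTop
    have he : ((fun x : ℝ => x ^ 2) ∘ abs) = fun y : ℝ => y ^ 2 := by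
      funext y
      simp [Function.comp, sq_abs]
    rwa [he] at h
  -- conclude
  have hFTC := MeasureTheory.integral_of_hasDerivAt_of_tendsto hG (hfint.add hgint) hbot htop
  rw [MeasureTheory.integral_add hfint hgint] at hFTC
  rw [e1, e2]
  simpa using hFTC
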